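/- Fix a > 0, an integer n ≥ 0, an integer k with 0 ≤ k ≤ n, and θ ∈ (0,1). For any sequences (s_j) and (t_j) of positive reals with 0 < s_j < t_j, t_j → ∞ and s_j/t_j → θ, one has lim_{j→∞} C(n,k) · B_k(a s_j) B_{n-k}(a(t_j - s_j)) / B_n(a t_j) = C(n,k) θ^k (1-θ)^{n-k}; in other words, the conditional distribution of the iterated Poisson process converges to a binomial distribution with parameters n and θ. (The key fact is that B_n(x)/x^n → 1 as x → ∞.) -/

import Mathlib

open scoped BigOperators
open Filter MeasureTheory

/-- Bell polynomial: `B n x = e^{-x} * Σ_{k=0}^∞ k^n x^k / k!` (n-th moment of Poisson(x)). -/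
noncomputable def bell (n : ℕ) (x : ℝ) : ℝ :=
  Real.exp (-x) * ∑' k : ℕ, (k : ℝ) ^ n * x ^ k / (Nat.factorial k : ℝ)

/-- Stirling numbers of the second kind. -/
def St : ℕ → ℕ → ℕ
  | 0, 0 => 1
  | 0, _ + 1 => 0
  | _ + 1, 0 => 0
  | n + 1, m + 1 => St n m + (m + 1) * St n (m + 1)

lemma St_eq_zero : ∀ {n m : ℕ}, n < m → St n m = 0
  | 0, _ + 1, _ => rfl
  | n + 1, m + 1, h => by
      rw [St, St_eq_zero (by omega), St_eq_zero (by omega)]; ring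

lemma St_self : ∀ n : ℕ, St n n = 1
  | 0 => rfl
  | n + 1 => by rw [St, St_self n, St_eq_zero (by omega)]; ring

lemma pow_eq_sum_St (n k : ℕ) :
    (k : ℝ) ^ n = ∑ m ∈ Finset.range (n + 1), (St n m : ℝ) * (k.descFactorial m : ℝ) := by
  induction n with
  | zero => simp [St]
  | succ n ih =>
    have key : ∀ m : ℕ, (k : ℝ) * (k.descFactorial m : ℝ) =
        (k.descFactorial (m + 1) : ℝ) + (m : ℝ) * (k.descFactorial m : ℝ) := by
      intro m
      rcases lt_or_ge k m with h | h
      · rw [Nat.descFactorial_eq_zero_iff_lt.2 h,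
          Nat.descFactorial_eq_zero_iff_lt.2 (by omega)]
        simp
      · rw [Nat.descFactorial_succ]
        push_cast [Nat.cast_sub h]
        ring
    have shift : ∑ m ∈ Finset.range (n + 1),
          ((m : ℝ) + 1) * (St n (m + 1) : ℝ) * (k.descFactorial (m + 1) : ℝ)
        = ∑ m ∈ Finset.range (n + 1), (m : ℝ) * (St n m : ℝ) * (k.descFactorial m : ℝ) := by
      have h1 := Finset.sum_range_succ'
        (fun m => (m : ℝ) * (St n m : ℝ) * (k.descFactorial m : ℝ)) (n + 1)
      have h2 := Finset.sum_range_succ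
        (fun m => (m : ℝ) * (St n m : ℝ) * (k.descFactorial m : ℝ)) (n + 1)
      simp only [St_eq_zero (Nat.lt_succ_self n), Nat.cast_zero, Nat.cast_succ, zero_mul,
        mul_zero, add_zero] at h1 h2
      rw [← h1]; exact h2
    have hexp : (k : ℝ) ^ (n + 1) = (k : ℝ) * (k : ℝ) ^ n := by ring
    rw [hexp, ih, Finset.mul_sum,
      Finset.sum_range_succ' (fun m => (St (n + 1) m : ℝ) * (k.descFactorial m : ℝ))]
    have h0 : St (n + 1) 0 = 0 := rfl
    rw [h0]
    simp only [Nat.cast_zero, zero_mul, add_zero]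
    have hst : ∀ m : ℕ, (St (n + 1) (m + 1) : ℝ) =
        (St n m : ℝ) + ((m : ℝ) + 1) * (St n (m + 1) : ℝ) := by
      intro m; rw [St]; push_cast; ring
    calc ∑ m ∈ Finset.range (n + 1), (k : ℝ) * ((St n m : ℝ) * (k.descFactorial m : ℝ))
        = ∑ m ∈ Finset.range (n + 1), ((St n m : ℝ) * (k.descFactorial (m + 1) : ℝ)
            + (m : ℝ) * (St n m : ℝ) * (k.descFactorial m : ℝ)) := by
          refine Finset.sum_congr rfl fun m _ => ?_
          linear_combination (St n m : ℝ) * key m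
      _ = ∑ m ∈ Finset.range (n + 1), (St n m : ℝ) * (k.descFactorial (m + 1) : ℝ)
            + ∑ m ∈ Finset.range (n + 1),
              ((m : ℝ) + 1) * (St n (m + 1) : ℝ) * (k.descFactorial (m + 1) : ℝ) := by
          rw [shift, Finset.sum_add_distrib]
      _ = ∑ m ∈ Finset.range (n + 1), (St (n + 1) (m + 1) : ℝ) * (k.descFactorial (m + 1) : ℝ) := by
          rw [← Finset.sum_add_distrib]
          refine Finset.sum_congr rfl fun m _ => ?_
          rw [hst m]; ring
lemma exp_tsum (x : ℝ) : ∑' j : ℕ, x ^ j / (Nat.factorial j : ℝ) = Real.exp x := by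
  rw [Real.exp_eq_exp_ℝ, NormedSpace.exp_eq_tsum_div]

lemma desc_shift (m : ℕ) (x : ℝ) : ∀ j : ℕ,
    (((j + m).descFactorial m : ℝ)) * x ^ (j + m) / (Nat.factorial (j + m) : ℝ)
      = x ^ m * (x ^ j / (Nat.factorial j : ℝ)) := by
  intro j
  have h := Nat.factorial_mul_descFactorial (show m ≤ j + m by omega)
  rw [Nat.add_sub_cancel] at h
  have h' : (Nat.factorial j : ℝ) * ((j + m).descFactorial m : ℝ)
      = (Nat.factorial (j + m) : ℝ) := by exact_mod_cast congrArg Nat.cast h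
  have h1 : (Nat.factorial (j + m) : ℝ) ≠ 0 := Nat.cast_ne_zero.2 (Nat.factorial_ne_zero _)
  have h2 : (Nat.factorial j : ℝ) ≠ 0 := Nat.cast_ne_zero.2 (Nat.factorial_ne_zero _)
  field_simp
  rw [pow_add]
  linear_combination x ^ j * x ^ m * h'

lemma summable_desc (m : ℕ) (x : ℝ) :
    Summable (fun k : ℕ => (k.descFactorial m : ℝ) * x ^ k / (Nat.factorial k : ℝ)) := by
  refine (summable_nat_add_iff m).1 ?_
  exact Summable.congr ((Real.summable_pow_div_factorial x).mul_left (x ^ m))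
    (fun j => (desc_shift m x j).symm)

lemma tsum_desc (m : ℕ) (x : ℝ) :
    ∑' k : ℕ, (k.descFactorial m : ℝ) * x ^ k / (Nat.factorial k : ℝ)
      = x ^ m * Real.exp x := by
  rw [← Summable.sum_add_tsum_nat_add m (summable_desc m x)]
  have h0 : ∑ i ∈ Finset.range m, (i.descFactorial m : ℝ) * x ^ i / (Nat.factorial i : ℝ) = 0 := by
    refine Finset.sum_eq_zero fun i hi => ?_
    rw [Nat.descFactorial_eq_zero_iff_lt.2 (Finset.mem_range.1 hi)]
    simp
  rw [h0, zero_add, tsum_congr (desc_shift m x), tsum_mul_left, exp_tsum]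

lemma summable_bell (n : ℕ) (x : ℝ) :
    Summable (fun k : ℕ => (k : ℝ) ^ n * x ^ k / (Nat.factorial k : ℝ)) := by
  refine Summable.congr (summable_sum (s := Finset.range (n + 1))
    (f := fun m k => (St n m : ℝ) * ((k.descFactorial m : ℝ) * x ^ k / (Nat.factorial k : ℝ)))
    (fun m _ => (summable_desc m x).mul_left _)) (fun k => ?_)
  rw [pow_eq_sum_St, Finset.sum_mul, Finset.sum_div]
  exact Finset.sum_congr rfl fun m _ => by ring

lemma bell_eq (n : ℕ) (x : ℝ) :
    bell n x = ∑ m ∈ Finset.range (n + 1), (St n m : ℝ) * x ^ m := by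
  unfold bell
  have h : ∀ k : ℕ, (k : ℝ) ^ n * x ^ k / (Nat.factorial k : ℝ)
      = ∑ m ∈ Finset.range (n + 1),
          (St n m : ℝ) * ((k.descFactorial m : ℝ) * x ^ k / (Nat.factorial k : ℝ)) := by
    intro k
    rw [pow_eq_sum_St, Finset.sum_mul, Finset.sum_div]
    exact Finset.sum_congr rfl fun m _ => by ring
  rw [tsum_congr h, Summable.tsum_finsetSum (fun m _ => (summable_desc m x).mul_left _)]
  have he : Real.exp (-x) * Real.exp x = 1 := by rw [← Real.exp_add]; simp
  rw [Finset.mul_sum]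
  refine Finset.sum_congr rfl fun m _ => ?_
  rw [tsum_mul_left, tsum_desc]
  linear_combination (St n m : ℝ) * x ^ m * he
lemma bell_pos (n : ℕ) {x : ℝ} (hx : 0 < x) : 0 < bell n x := by
  rw [bell_eq]
  refine Finset.sum_pos' (fun m _ => by positivity) ⟨n, Finset.self_mem_range_succ n, ?_⟩
  rw [St_self]
  simpa using pow_pos hx n

lemma bell_div_tendsto (n : ℕ) :
    Tendsto (fun x : ℝ => bell n x / x ^ n) atTop (nhds 1) := by
  have h : ∀ m ∈ Finset.range (n + 1),
      Tendsto (fun x : ℝ => (St n m : ℝ) * x ^ m / x ^ n) atTop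
        (nhds (if m = n then 1 else 0)) := by
    intro m hm
    rcases eq_or_ne m n with rfl | hmn
    · simp only [if_pos rfl, St_self, Nat.cast_one, one_mul]
      refine Tendsto.congr' ?_ tendsto_const_nhds
      filter_upwards [eventually_gt_atTop (0 : ℝ)] with x hx
      simp [div_self (pow_ne_zero _ hx.ne')]
    · have hm' : m < n := lt_of_le_of_ne (Nat.lt_succ_iff.1 (Finset.mem_range.1 hm)) hmn
      simp only [if_neg hmn]
      have h2 := (tendsto_pow_div_pow_atTop_zero (𝕜 := ℝ) hm').const_mul (St n m : ℝ)
      simpa [mul_div_assoc] using h2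
  have hsum := tendsto_finset_sum (Finset.range (n + 1)) h
  have hval : (∑ m ∈ Finset.range (n + 1), if m = n then (1 : ℝ) else 0) = 1 := by
    simp
  rw [hval] at hsum
  refine Tendsto.congr' ?_ hsum
  filter_upwards with x
  rw [bell_eq, Finset.sum_div]
/-- the conditional distribution converges to a binomial distribution:
if `t_j → ∞` and `s_j/t_j → θ ∈ (0,1)` then
`C(n,k) B_k(a s_j) B_{n-k}(a(t_j - s_j)) / B_n(a t_j) → C(n,k) θ^k (1-θ)^{n-k}`. -/
theorem stmt9 (a : ℝ) (ha : 0 < a) (n k : ℕ) (hk : k ≤ n)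
    (θ : ℝ) (hθ : θ ∈ Set.Ioo (0 : ℝ) 1)
    (s t : ℕ → ℝ) (hs : ∀ j, 0 < s j) (hst : ∀ j, s j < t j)
    (ht : Tendsto t atTop atTop)
    (hratio : Tendsto (fun j => s j / t j) atTop (nhds θ)) :
    Tendsto (fun j => (Nat.choose n k : ℝ) * bell k (a * s j) * bell (n - k) (a * (t j - s j))
        / bell n (a * t j)) atTop
      (nhds ((Nat.choose n k : ℝ) * θ ^ k * (1 - θ) ^ (n - k))) := by
  obtain ⟨hθ0, hθ1⟩ := hθ
  obtain ⟨m, rfl⟩ : ∃ m, n = k + m := ⟨n - k, (Nat.add_sub_cancel' hk).symm⟩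
  simp only [Nat.add_sub_cancel_left]
  set C : ℝ := (Nat.choose (k + m) k : ℝ) with hC
  have ht0 : ∀ j, 0 < t j := fun j => (hs j).trans (hst j)
  have hone : Tendsto (fun j => 1 - s j / t j) atTop (nhds (1 - θ)) :=
    tendsto_const_nhds.sub hratio
  have hsa : Tendsto s atTop atTop := by
    refine Tendsto.congr (f₁ := fun j => t j * (s j / t j)) ?_
      (Filter.Tendsto.atTop_mul_pos hθ0 ht hratio)
    intro j
    show t j * (s j / t j) = s j
    rw [mul_comm]
    exact div_mul_cancel₀ _ (ht0 j).ne'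
  have htsa : Tendsto (fun j => t j - s j) atTop atTop := by
    refine Tendsto.congr (f₁ := fun j => t j * (1 - s j / t j)) ?_
      (Filter.Tendsto.atTop_mul_pos (by linarith) ht hone)
    intro j
    show t j * (1 - s j / t j) = t j - s j
    rw [mul_sub, mul_one, mul_comm (t j), div_mul_cancel₀ _ (ht0 j).ne']
  have hp : Tendsto (fun j => a * s j) atTop atTop :=
    (tendsto_const_mul_atTop_of_pos ha).2 hsa
  have hq : Tendsto (fun j => a * (t j - s j)) atTop atTop :=
    (tendsto_const_mul_atTop_of_pos ha).2 htsa
  have hr : Tendsto (fun j => a * t j) atTop atTop :=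
    (tendsto_const_mul_atTop_of_pos ha).2 ht
  have g1 : Tendsto (fun j => bell k (a * s j) / (a * s j) ^ k) atTop (nhds 1) :=
    (bell_div_tendsto k).comp hp
  have g2 : Tendsto (fun j => bell m (a * (t j - s j)) / (a * (t j - s j)) ^ m) atTop (nhds 1) :=
    (bell_div_tendsto m).comp hq
  have g3 : Tendsto (fun j => bell (k + m) (a * t j) / (a * t j) ^ (k + m)) atTop (nhds 1) :=
    (bell_div_tendsto (k + m)).comp hr
  have hpow : Tendsto (fun j => (s j / t j) ^ k * (1 - s j / t j) ^ m) atTop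
      (nhds (θ ^ k * (1 - θ) ^ m)) := (hratio.pow k).mul (hone.pow m)
  have main : Tendsto (fun j =>
      C * (bell k (a * s j) / (a * s j) ^ k)
        * (bell m (a * (t j - s j)) / (a * (t j - s j)) ^ m)
        / (bell (k + m) (a * t j) / (a * t j) ^ (k + m))
        * ((s j / t j) ^ k * (1 - s j / t j) ^ m)) atTop
      (nhds (C * 1 * 1 / 1 * (θ ^ k * (1 - θ) ^ m))) :=
    (((tendsto_const_nhds.mul g1).mul g2).div g3 one_ne_zero).mul hpow
  have hval : C * 1 * 1 / 1 * (θ ^ k * (1 - θ) ^ m) = C * θ ^ k * (1 - θ) ^ m := by ring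
  rw [hval] at main
  refine main.congr fun j => ?_
  have h1 : s j ≠ 0 := (hs j).ne'
  have h2 : t j ≠ 0 := (ht0 j).ne'
  have h3 : t j - s j ≠ 0 := (sub_pos.2 (hst j)).ne'
  have h4 : bell (k + m) (a * t j) ≠ 0 := (bell_pos _ (mul_pos ha (ht0 j))).ne'
  have h5 : (1 : ℝ) - s j / t j = (t j - s j) / t j := by field_simp
  rw [h5, mul_pow a (s j), mul_pow a (t j - s j), mul_pow a (t j), pow_add a, pow_add (t j)]
  rw [div_pow, div_pow]
  field_simp
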